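/- Suppose Δ ⊆ ℝ^m is nonempty and bounded, f is lower semicontinuous on X × cl(Δ), Assumptions 2–4 hold, and there exists L_g ≥ 0 such that |g_d(ω) − g_d(ω')| ≤ L_g · max_{1≤i≤d} ‖δ_i − δ'_i‖ for all ω, ω' ∈ cl(Δ)^d. Then for every N ≥ d, every ε ∈ (0,1) and every r > 0 with φ(r) ≥ ε, it holds that ℙ^N{ ω ∈ Δ^N : J* ≤ g_N(ω) + L_g · r } ≥ 1 − d(1−ε)^N. -/

import Mathlib

open MeasureTheory Set

/-- Scenario optimal value `g_N(ω) = inf { c·x : x ∈ X, f(x, δ_i) ≤ 0, i = 1,…,N }`. -/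
noncomputable def scenVal {d m N : ℕ} (X : Set (EuclideanSpace ℝ (Fin d)))
    (c : EuclideanSpace ℝ (Fin d))
    (f : EuclideanSpace ℝ (Fin d) → EuclideanSpace ℝ (Fin m) → ℝ)
    (ω : Fin N → EuclideanSpace ℝ (Fin m)) : ℝ :=
  sInf ((fun x => ∑ i, c i * x i) '' {x ∈ X | ∀ i, f x (ω i) ≤ 0})

/-- Robust optimal value `J* = inf { c·x : x ∈ X, f(x,δ) ≤ 0 for all δ ∈ Δ }`. -/
noncomputable def robustVal {d m : ℕ} (X : Set (EuclideanSpace ℝ (Fin d)))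
    (c : EuclideanSpace ℝ (Fin d))
    (f : EuclideanSpace ℝ (Fin d) → EuclideanSpace ℝ (Fin m) → ℝ)
    (Δ : Set (EuclideanSpace ℝ (Fin m))) : ℝ :=
  sInf ((fun x => ∑ i, c i * x i) '' {x ∈ X | ∀ δ ∈ Δ, f x δ ≤ 0})

/-- Theorem 9 (explicit bound): under boundedness of Δ, l.s.c. of f on X × cl(Δ),
Assumptions 2–4 and the Lipschitz property of g_d, for every N ≥ d, ε ∈ (0,1) and
r > 0 with φ(r) ≥ ε, one has
ℙ^N { ω ∈ Δ^N : J* ≤ g_N(ω) + L_g·r } ≥ 1 − d(1−ε)^N. -/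
theorem stmt_11 {d m : ℕ} (hd : 1 ≤ d)
    (X : Set (EuclideanSpace ℝ (Fin d))) (c : EuclideanSpace ℝ (Fin d))
    (Δ : Set (EuclideanSpace ℝ (Fin m))) (hΔne : Δ.Nonempty)
    (hΔbdd : Bornology.IsBounded Δ)
    (f : EuclideanSpace ℝ (Fin d) → EuclideanSpace ℝ (Fin m) → ℝ)
    (hlsc : LowerSemicontinuousOn (Function.uncurry f) (X ×ˢ closure Δ))
    -- Assumption 2
    (hfeas : ∃ x ∈ X, ∀ δ ∈ Δ, f x δ ≤ 0)
    -- Assumption 3 (X compact convex, f(·,δ) convex)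
    (hXcomp : IsCompact X) (hXconv : Convex ℝ X)
    (hconv : ∀ δ ∈ Δ, ConvexOn ℝ X fun x => f x δ)
    -- probability measure supported on Δ
    (ℙ : Measure (EuclideanSpace ℝ (Fin m))) [IsProbabilityMeasure ℙ]
    (hΔmeas : MeasurableSet Δ) (hΔone : ℙ Δ = 1)
    -- Assumption 4 (regularity)
    (φ : ℝ → ℝ) (hφmono : StrictMonoOn φ (Set.Ici 0))
    (hφrange : ∀ r ∈ Set.Ici (0 : ℝ), φ r ∈ Set.Icc (0 : ℝ) 1)
    (hφreg : ∀ δ ∈ closure Δ, ∀ r : ℝ, 0 < r →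
      ENNReal.ofReal (φ r) ≤ ℙ (Metric.ball δ r ∩ Δ))
    -- Lipschitz condition on g_d
    (Lg : ℝ) (hLg : 0 ≤ Lg)
    (hLip : ∀ ω ω' : Fin d → EuclideanSpace ℝ (Fin m),
      (∀ i, ω i ∈ closure Δ) → (∀ i, ω' i ∈ closure Δ) →
      |scenVal X c f ω - scenVal X c f ω'| ≤
        Lg * Finset.univ.sup' (Finset.univ_nonempty_iff.mpr ⟨⟨0, hd⟩⟩)
          (fun i => ‖ω i - ω' i‖))
    (N : ℕ) (hN : d ≤ N)
    (ε : ℝ) (hε : ε ∈ Set.Ioo (0 : ℝ) 1)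
    (r : ℝ) (hr : 0 < r) (hφr : ε ≤ φ r) :
    ENNReal.ofReal (1 - d * (1 - ε) ^ N) ≤
      (Measure.pi fun _ : Fin N => ℙ)
        {ω : Fin N → EuclideanSpace ℝ (Fin m) |
          (∀ i, ω i ∈ Δ) ∧ robustVal X c f Δ ≤ scenVal X c f ω + Lg * r} := by
  classical
  set obj : EuclideanSpace ℝ (Fin d) → ℝ := fun x => ∑ i, c i * x i with hobj
  obtain ⟨x₀, hx₀X, hx₀f⟩ := hfeas
  have hobjcont : Continuous obj :=
    continuous_finset_sum _ fun i _ =>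
      continuous_const.mul ((EuclideanSpace.proj (𝕜 := ℝ) i).continuous)
  have hbddX : BddBelow (obj '' X) := (hXcomp.image hobjcont).bddBelow
  have hlin : IsLinearMap ℝ obj := by
    constructor
    · intro x y
      simp only [hobj, PiLp.add_apply, mul_add]
      rw [Finset.sum_add_distrib]
    · intro a x
      simp only [hobj, PiLp.smul_apply, smul_eq_mul, Finset.mul_sum]
      exact Finset.sum_congr rfl fun i _ => by ring
  set J : ℝ := robustVal X c f Δ with hJdef
  -- closedness of constraint sets
  have hCclosed : ∀ δ ∈ closure Δ, IsClosed {x | x ∈ X ∧ f x δ ≤ 0} := by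
    intro δ hδ
    apply isClosed_of_closure_subset
    intro x hx
    have hxX : x ∈ X := hXcomp.isClosed.closure_subset
      ((closure_mono (fun y (hy : y ∈ X ∧ f y δ ≤ 0) => hy.1)) hx)
    refine ⟨hxX, ?_⟩
    by_contra hpos
    push_neg at hpos
    have h1 := hlsc (x, δ) ⟨hxX, hδ⟩ 0 hpos
    have htend : Filter.Tendsto (fun y => (y, δ))
        (nhdsWithin x {x | x ∈ X ∧ f x δ ≤ 0}) (nhdsWithin (x, δ) (X ×ˢ closure Δ)) := by
      rw [tendsto_nhdsWithin_iff]
      constructor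
      · exact ((Continuous.prodMk_left δ).tendsto x).mono_left nhdsWithin_le_nhds
      · filter_upwards [self_mem_nhdsWithin] with y hy
        exact ⟨hy.1, hδ⟩
    have h2 := htend.eventually h1
    have h3 : ∀ᶠ y in nhdsWithin x {x | x ∈ X ∧ f x δ ≤ 0}, f y δ ≤ 0 := by
      filter_upwards [self_mem_nhdsWithin] with y hy using hy.2
    have hne : (nhdsWithin x {x | x ∈ X ∧ f x δ ≤ 0}).NeBot :=
      mem_closure_iff_nhdsWithin_neBot.mp hx
    obtain ⟨y, hy1, hy2⟩ := (h2.and h3).exists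
    exact absurd hy1 (not_lt.mpr hy2)
  -- Step A: Helly-type result
  have stepA : ∀ t : ℝ, t < J → ∃ g : Fin d → EuclideanSpace ℝ (Fin m),
      (∀ j, g j ∈ Δ) ∧ t ≤ scenVal X c f g := by
    intro t ht
    set C : Option {δ : EuclideanSpace ℝ (Fin m) // δ ∈ Δ} → Set (EuclideanSpace ℝ (Fin d)) :=
      fun o => Option.elim o {x | x ∈ X ∧ obj x ≤ t} (fun a => {x | x ∈ X ∧ f x a.1 ≤ 0})
      with hC
    have hconvC : ∀ o, Convex ℝ (C o) := by
      rintro (_ | a)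
      · exact hXconv.inter (convex_halfSpace_le hlin t)
      · exact (hconv a.1 a.2).convex_le 0
    have hclosed0 : IsClosed {x | x ∈ X ∧ obj x ≤ t} := by
      have h : {x | x ∈ X ∧ obj x ≤ t} = X ∩ obj ⁻¹' (Set.Iic t) := rfl
      rw [h]
      exact hXcomp.isClosed.inter (isClosed_Iic.preimage hobjcont)
    have hcompC : ∀ o, IsCompact (C o) := by
      rintro (_ | a)
      · exact hXcomp.of_isClosed_subset hclosed0 fun x hx => hx.1
      · exact hXcomp.of_isClosed_subset (hCclosed a.1 (subset_closure a.2)) fun x hx => hx.1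
    have hbddR : BddBelow (obj '' {x | x ∈ X ∧ ∀ δ ∈ Δ, f x δ ≤ 0}) :=
      hbddX.mono (Set.image_mono fun x hx => hx.1)
    have hempty : ⋂ o, C o = ∅ := by
      rw [Set.eq_empty_iff_forall_notMem]
      intro x hx
      have h0 : x ∈ C none := Set.mem_iInter.mp hx none
      have hrf : ∀ δ ∈ Δ, f x δ ≤ 0 := fun δ hδ => (Set.mem_iInter.mp hx (some ⟨δ, hδ⟩)).2
      have hJle : J ≤ obj x := csInf_le hbddR ⟨x, ⟨h0.1, hrf⟩, rfl⟩
      have : obj x ≤ t := h0.2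
      linarith
    have hnot : ¬ ∀ (I : Finset (Option {δ : EuclideanSpace ℝ (Fin m) // δ ∈ Δ})),
        I.card ≤ Module.finrank ℝ (EuclideanSpace ℝ (Fin d)) + 1 → (⋂ i ∈ I, C i).Nonempty := by
      intro h
      have := Convex.helly_theorem_compact' (𝕜 := ℝ) hconvC hcompC h
      rw [hempty] at this
      exact Set.not_nonempty_empty this
    push_neg at hnot
    obtain ⟨I, hIcard, hIempty⟩ := hnot
    rw [finrank_euclideanSpace_fin] at hIcard
    have hnoneI : none ∈ I := by
      by_contra hn
      have hmem : x₀ ∈ ⋂ i ∈ I, C i := by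
        apply Set.mem_iInter₂.mpr
        rintro (_ | a) hi
        · exact absurd hi hn
        · exact ⟨hx₀X, hx₀f a.1 a.2⟩
      rw [hIempty] at hmem
      exact hmem
    set S := I.eraseNone with hS
    have hScard : S.card ≤ d := by
      have h1 : S.map ⟨some, Option.some_injective _⟩ ⊆ I.erase none := by
        intro x hx
        rw [Finset.mem_map] at hx
        obtain ⟨a, ha, rfl⟩ := hx
        exact Finset.mem_erase.mpr ⟨Option.some_ne_none a, Finset.mem_eraseNone.mp ha⟩
      have h2 := Finset.card_le_card h1
      rw [Finset.card_map] at h2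
      have h3 : (I.erase none).card = I.card - 1 := Finset.card_erase_of_mem hnoneI
      omega
    obtain ⟨δ₀, hδ₀⟩ := hΔne
    set g : Fin d → EuclideanSpace ℝ (Fin m) := fun j =>
      if h : (j : ℕ) < S.card then (S.equivFin.symm ⟨(j : ℕ), h⟩).1.1 else δ₀ with hg
    have hgΔ : ∀ j, g j ∈ Δ := by
      intro j
      by_cases h : (j : ℕ) < S.card
      · simp only [hg, dif_pos h]
        exact (S.equivFin.symm ⟨(j : ℕ), h⟩).1.2
      · simp only [hg, dif_neg h]
        exact hδ₀
    have hcover : ∀ a : {δ : EuclideanSpace ℝ (Fin m) // δ ∈ Δ},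
        a ∈ S → ∃ j : Fin d, g j = a.1 := by
      intro a ha
      set k := S.equivFin ⟨a, ha⟩ with hk
      have hkd : (k : ℕ) < d := lt_of_lt_of_le k.isLt hScard
      refine ⟨⟨(k : ℕ), hkd⟩, ?_⟩
      have hlt : ((⟨(k : ℕ), hkd⟩ : Fin d) : ℕ) < S.card := k.isLt
      simp only [hg, dif_pos hlt]
      have heq : (⟨((⟨(k : ℕ), hkd⟩ : Fin d) : ℕ), hlt⟩ : Fin S.card) = k := rfl
      rw [heq, hk, Equiv.symm_apply_apply]
    refine ⟨g, hgΔ, ?_⟩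
    apply le_csInf
    · exact ⟨obj x₀, Set.mem_image_of_mem _ ⟨hx₀X, fun j => hx₀f _ (hgΔ j)⟩⟩
    · rintro y ⟨x, ⟨hxX, hxf⟩, rfl⟩
      by_contra hlt
      push_neg at hlt
      have hxmem : x ∈ ⋂ i ∈ I, C i := by
        apply Set.mem_iInter₂.mpr
        rintro (_ | a) hi
        · exact ⟨hxX, hlt.le⟩
        · obtain ⟨j, hj⟩ := hcover a (Finset.mem_eraseNone.mpr hi)
          exact ⟨hxX, by rw [← hj]; exact hxf j⟩
      rw [hIempty] at hxmem
      exact hxmem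
  -- maximizer of scenVal over (closure Δ)^d
  have hTcomp : IsCompact {ω : Fin d → EuclideanSpace ℝ (Fin m) | ∀ i, ω i ∈ closure Δ} := by
    have h : {ω : Fin d → EuclideanSpace ℝ (Fin m) | ∀ i, ω i ∈ closure Δ}
        = Set.pi Set.univ (fun _ : Fin d => closure Δ) := by
      ext ω; simp [Set.mem_pi]
    rw [h]
    exact isCompact_univ_pi fun _ =>
      Metric.isCompact_of_isClosed_isBounded isClosed_closure hΔbdd.closure
  have hTne : {ω : Fin d → EuclideanSpace ℝ (Fin m) | ∀ i, ω i ∈ closure Δ}.Nonempty :=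
    ⟨fun _ => hΔne.choose, fun _ => subset_closure hΔne.choose_spec⟩
  have hscont : ContinuousOn (scenVal X c f)
      {ω : Fin d → EuclideanSpace ℝ (Fin m) | ∀ i, ω i ∈ closure Δ} := by
    apply LipschitzOnWith.continuousOn (K := Real.toNNReal Lg)
    rw [lipschitzOnWith_iff_dist_le_mul]
    intro ω hω ω' hω'
    have h1 := hLip ω ω' hω hω'
    rw [Real.dist_eq]
    refine h1.trans ?_
    rw [Real.coe_toNNReal Lg hLg]
    apply mul_le_mul_of_nonneg_left _ hLg
    apply Finset.sup'_le
    intro i _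
    rw [← dist_eq_norm]
    exact dist_le_pi_dist ω ω' i
  obtain ⟨ωs, hωsT, hmax⟩ := hTcomp.exists_isMaxOn hTne hscont
  have hωscl : ∀ i, ωs i ∈ closure Δ := hωsT
  have hJles : J ≤ scenVal X c f ωs := by
    by_contra h
    push_neg at h
    obtain ⟨g, hgΔ, hgle⟩ := stepA ((scenVal X c f ωs + J) / 2) (by linarith)
    have hgT : g ∈ {ω : Fin d → EuclideanSpace ℝ (Fin m) | ∀ i, ω i ∈ closure Δ} :=
      fun i => subset_closure (hgΔ i)
    have := hmax hgT
    simp only [Set.mem_setOf_eq] at this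
    linarith
  -- Step C : on the good event, the inequality holds
  set A : Fin d → Set (EuclideanSpace ℝ (Fin m)) := fun j => Metric.ball (ωs j) r ∩ Δ with hA
  set G : Set (Fin N → EuclideanSpace ℝ (Fin m)) :=
    (Set.pi Set.univ fun _ : Fin N => Δ) ∩
      ⋂ j : Fin d, ⋃ i : Fin N,
        (fun ω : Fin N → EuclideanSpace ℝ (Fin m) => ω i) ⁻¹' A j with hG
  have hGsub : G ⊆ {ω : Fin N → EuclideanSpace ℝ (Fin m) |
      (∀ i, ω i ∈ Δ) ∧ robustVal X c f Δ ≤ scenVal X c f ω + Lg * r} := by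
    rintro ω ⟨hωΔ, hωA⟩
    have hωΔ' : ∀ i, ω i ∈ Δ := fun i => hωΔ i (Set.mem_univ i)
    simp only [Set.mem_iInter, Set.mem_iUnion, Set.mem_preimage] at hωA
    choose σ hσ using hωA
    refine ⟨hωΔ', ?_⟩
    have hmono : scenVal X c f (fun j => ω (σ j)) ≤ scenVal X c f ω := by
      apply csInf_le_csInf
      · exact hbddX.mono (Set.image_mono fun x hx => hx.1)
      · exact ⟨obj x₀, Set.mem_image_of_mem _ ⟨hx₀X, fun i => hx₀f _ (hωΔ' i)⟩⟩
      · exact Set.image_mono fun x hx => ⟨hx.1, fun j => hx.2 (σ j)⟩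
    have hLipApp := hLip (fun j => ω (σ j)) ωs
      (fun j => subset_closure (hωΔ' (σ j))) hωscl
    have hsup : (Finset.univ.sup' (Finset.univ_nonempty_iff.mpr ⟨⟨0, hd⟩⟩)
        fun j : Fin d => ‖ω (σ j) - ωs j‖) ≤ r := by
      apply Finset.sup'_le
      intro j _
      have hb := (hσ j).1
      rw [Metric.mem_ball, dist_eq_norm] at hb
      exact hb.le
    have habs : |scenVal X c f (fun j => ω (σ j)) - scenVal X c f ωs| ≤ Lg * r :=
      hLipApp.trans (mul_le_mul_of_nonneg_left hsup hLg)
    have h2 : scenVal X c f ωs - Lg * r ≤ scenVal X c f (fun j => ω (σ j)) := by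
      have := abs_le.mp habs
      linarith [this.1]
    have : robustVal X c f Δ ≤ scenVal X c f ω + Lg * r := by
      have hJ' : robustVal X c f Δ = J := rfl
      rw [hJ']
      linarith
    exact this
  -- measure estimate
  have hAmeas : ∀ j, MeasurableSet (A j) := fun j => measurableSet_ball.inter hΔmeas
  have hGmeas : MeasurableSet G := by
    apply MeasurableSet.inter
    · exact MeasurableSet.univ_pi fun _ => hΔmeas
    · exact MeasurableSet.iInter fun j => MeasurableSet.iUnion fun i =>
        (measurable_pi_apply i) (hAmeas j)
  have hAε : ∀ j, ENNReal.ofReal ε ≤ ℙ (A j) := fun j =>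
    le_trans (ENNReal.ofReal_le_ofReal hφr) (hφreg (ωs j) (hωscl j) r hr)
  have hεle1 : ε ≤ 1 := hε.2.le
  have hcompl : (Measure.pi fun _ : Fin N => ℙ) Gᶜ ≤ ENNReal.ofReal (d * (1 - ε) ^ N) := by
    have hGc : Gᶜ ⊆ (Set.pi Set.univ fun _ : Fin N => Δ)ᶜ ∪
        ⋃ j : Fin d, Set.pi Set.univ fun _ : Fin N => (A j)ᶜ := by
      rw [hG, Set.compl_inter]
      apply Set.union_subset_union_right
      rw [Set.compl_iInter]
      apply Set.iUnion_mono
      intro j ω hω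
      simp only [Set.mem_compl_iff, Set.mem_iUnion, Set.mem_preimage, not_exists] at hω
      intro i _
      exact hω i
    refine (measure_mono hGc).trans ?_
    refine (measure_union_le _ _).trans ?_
    have h1 : (Measure.pi fun _ : Fin N => ℙ) (Set.pi Set.univ fun _ : Fin N => Δ)ᶜ = 0 := by
      rw [prob_compl_eq_one_sub (MeasurableSet.univ_pi fun _ => hΔmeas)]
      rw [Measure.pi_pi]
      simp [hΔone]
    rw [h1, zero_add]
    refine (measure_iUnion_le _).trans ?_
    have h2 : ∀ j : Fin d, (Measure.pi fun _ : Fin N => ℙ)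
        (Set.pi Set.univ fun _ : Fin N => (A j)ᶜ) ≤ ENNReal.ofReal ((1 - ε) ^ N) := by
      intro j
      rw [Measure.pi_pi]
      have h3 : ℙ (A j)ᶜ ≤ ENNReal.ofReal (1 - ε) := by
        rw [prob_compl_eq_one_sub (hAmeas j)]
        have h4 : ENNReal.ofReal (1 - ε) = 1 - ENNReal.ofReal ε := by
          rw [ENNReal.ofReal_sub _ hε.1.le, ENNReal.ofReal_one]
        rw [h4]
        exact tsub_le_tsub_left (hAε j) 1
      calc ∏ _i : Fin N, ℙ (A j)ᶜ = ℙ (A j)ᶜ ^ N := by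
            rw [Finset.prod_const, Finset.card_univ, Fintype.card_fin]
        _ ≤ ENNReal.ofReal (1 - ε) ^ N := pow_le_pow_left' h3 N
        _ = ENNReal.ofReal ((1 - ε) ^ N) := (ENNReal.ofReal_pow (by linarith) N).symm
    calc (∑' j : Fin d, (Measure.pi fun _ : Fin N => ℙ)
          (Set.pi Set.univ fun _ : Fin N => (A j)ᶜ))
        ≤ ∑' _j : Fin d, ENNReal.ofReal ((1 - ε) ^ N) := ENNReal.tsum_le_tsum h2
      _ = (d : ENNReal) * ENNReal.ofReal ((1 - ε) ^ N) := by
          rw [tsum_fintype]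
          simp [Finset.sum_const, nsmul_eq_mul]
      _ = ENNReal.ofReal (d * (1 - ε) ^ N) := by
          rw [ENNReal.ofReal_mul (Nat.cast_nonneg d), ENNReal.ofReal_natCast]
  have hμG : ENNReal.ofReal (1 - d * (1 - ε) ^ N) ≤ (Measure.pi fun _ : Fin N => ℙ) G := by
    have hnn : (0 : ℝ) ≤ d * (1 - ε) ^ N :=
      mul_nonneg (Nat.cast_nonneg d) (pow_nonneg (by linarith [hε.2]) N)
    have h4 : ENNReal.ofReal (1 - d * (1 - ε) ^ N)
        = 1 - ENNReal.ofReal (d * (1 - ε) ^ N) := by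
      rw [ENNReal.ofReal_sub _ hnn, ENNReal.ofReal_one]
    rw [h4]
    have h5 : (Measure.pi fun _ : Fin N => ℙ) G = 1 - (Measure.pi fun _ : Fin N => ℙ) Gᶜ := by
      have h6 := prob_compl_eq_one_sub (μ := Measure.pi fun _ : Fin N => ℙ) hGmeas.compl
      rwa [compl_compl] at h6
    rw [h5]
    exact tsub_le_tsub_left hcompl 1
  exact hμG.trans (measure_mono hGsub)
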